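/- arXiv:1211.1699 — 6 statements merged into one kernel-verified Lean document; each statement's English description precedes it below -/
import Mathlib

section
/- (Generalized AHK regret guarantee.) Fix r ≥ 2, K ∈ ℕ, ρ > 0, ε ∈ (0, ρ], and set η = ε/(2ρ). Let M_{i,t} ∈ ℝ for i ∈ {1,…,r}, t ∈ {1,…,K} satisfy |M_{i,t}| ≤ ρ for all i,t, and define weights y_{i,t} by the multiplicative update rule: y_{i,1} = 1, and y_{i,t+1} = y_{i,t}·(1−η)^{M_{i,t}/ρ} if M_{i,t} ≥ 0, y_{i,t+1} = y_{i,t}·(1+η)^{−M_{i,t}/ρ} if M_{i,t} < 0. Suppose that in every round t, ∑_{j=1}^r y_{j,t} M_{j,t} ≥ 0. If K ≥ 4ρ² ln r / ε², then for every i ∈ {1,…,r}, (1/K)·∑_{t=1}^K M_{i,t} ≥ −ε. -/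
open Finset

lemma exp_neg_quartic (u : ℝ) (h0 : 0 ≤ u) (h1 : u ≤ 1) :
    Real.exp (-u) ≤ 1 - u + u^2/2 - u^3/6 + 5*u^4/96 := by
  have habs : |(-u)| ≤ 1 := by rw [abs_neg, abs_of_nonneg h0]; exact h1
  have hb := Real.exp_bound habs (by norm_num : 0 < 4)
  rw [abs_le] at hb
  have h2 := hb.2
  simp only [Finset.sum_range_succ, Finset.sum_range_zero, Nat.factorial] at h2
  rw [abs_neg, abs_of_nonneg h0] at h2
  norm_num at h2
  nlinarith [h2]

lemma exp_le_one_sub (η : ℝ) (h0 : 0 < η) (h : η ≤ 1/2) :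
    Real.exp (-η - η^2) ≤ 1 - η := by
  have hq := exp_neg_quartic (η + η^2) (by positivity) (by nlinarith)
  have heq : -(η + η^2) = -η - η^2 := by ring
  rw [heq] at hq
  refine hq.trans ?_
  nlinarith [sq_nonneg η, sq_nonneg (η*(1-2*η)), mul_nonneg (mul_nonneg h0.le h0.le) h0.le, sq_nonneg (1-2*η), mul_nonneg (sq_nonneg η) (by linarith : (0:ℝ) ≤ 1 - 2*η), mul_nonneg (mul_nonneg (sq_nonneg η) (sq_nonneg η)) (by linarith : (0:ℝ) ≤ 1 - 2*η)]

lemma exp_le_one_add (η : ℝ) (h0 : 0 < η) (h : η ≤ 1/2) :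
    Real.exp (η - η^2) ≤ 1 + η := by
  have h2 : 0 < 1 - η + η^2 := by nlinarith
  have h3 : Real.exp (η - η^2) * Real.exp (-(η-η^2)) = 1 := by
    rw [← Real.exp_add]; norm_num
  have h4 : Real.exp (η - η^2) ≤ 1 / (1 - η + η^2) := by
    rw [le_div_iff₀ h2]
    nlinarith [Real.add_one_le_exp (-(η - η^2)), Real.exp_pos (η - η^2), h3]
  refine h4.trans ?_
  rw [div_le_iff₀ h2]
  nlinarith

/-- Generalized AHK regret guarantee: with width `ρ`, learning rate
`η = ε/(2ρ)`, multiplicative weight updates, and nonnegative oracle value in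
every round, after `K ≥ 4ρ² ln r / ε²` rounds the average violation of each
constraint is at least `-ε`. -/
theorem generalized_ahk_guarantee
    (r K : ℕ) (hr : 2 ≤ r) (ρ ε : ℝ) (hρ : 0 < ρ) (hε : 0 < ε) (hερ : ε ≤ ρ)
    (η : ℝ) (hη : η = ε / (2 * ρ))
    (M : Fin r → ℕ → ℝ) (hM : ∀ i t, t < K → |M i t| ≤ ρ)
    (y : Fin r → ℕ → ℝ)
    (hy0 : ∀ i, y i 0 = 1)
    (hypos : ∀ i t, t < K → 0 ≤ M i t → y i (t + 1) = y i t * (1 - η) ^ (M i t / ρ))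
    (hyneg : ∀ i t, t < K → M i t < 0 → y i (t + 1) = y i t * (1 + η) ^ (-(M i t) / ρ))
    (horacle : ∀ t, t < K → 0 ≤ ∑ j, y j t * M j t)
    (hK : 4 * ρ ^ 2 * Real.log r / ε ^ 2 ≤ (K : ℝ)) :
    ∀ i, -ε ≤ (1 / (K : ℝ)) * ∑ t ∈ Finset.range K, M i t := by
  have hηpos : 0 < η := by rw [hη]; positivity
  have hηle : η ≤ 1/2 := by
    rw [hη, div_le_div_iff₀ (by linarith) (by norm_num)]; linarith
  have h1m : (0:ℝ) < 1 - η := by linarith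
  have h1p : (0:ℝ) < 1 + η := by linarith
  -- bounds on M/ρ
  have hxub : ∀ i t, t < K → M i t / ρ ≤ 1 := fun i t ht => by
    rw [div_le_one hρ]; exact (abs_le.mp (hM i t ht)).2
  have hxlb : ∀ i t, t < K → -1 ≤ M i t / ρ := fun i t ht => by
    rw [le_div_iff₀ hρ]; have := (abs_le.mp (hM i t ht)).1; linarith
  -- positivity of weights
  have hyall : ∀ t, t ≤ K → ∀ j, 0 < y j t := by
    intro t
    induction t with
    | zero => intro _ j; rw [hy0]; norm_num
    | succ n ih =>
      intro hn j
      have hn' : n < K := hn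
      have hyn := ih hn'.le j
      rcases le_or_gt 0 (M j n) with h | h
      · rw [hypos j n hn' h]; exact mul_pos hyn (Real.rpow_pos_of_pos h1m _)
      · rw [hyneg j n hn' h]; exact mul_pos hyn (Real.rpow_pos_of_pos h1p _)
  -- per-step upper bound
  have hstep : ∀ j t, t < K → y j (t+1) ≤ y j t * (1 - η * (M j t / ρ)) := by
    intro j t ht
    have hx1 := hxub j t ht
    have hxm1 := hxlb j t ht
    have hy := (hyall t ht.le j).le
    rcases le_or_gt 0 (M j t) with h | h
    · rw [hypos j t ht h]
      have hx0 : 0 ≤ M j t / ρ := div_nonneg h hρ.le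
      have hg := Real.geom_mean_le_arith_mean2_weighted (w₁ := 1 - M j t/ρ)
        (w₂ := M j t/ρ) (p₁ := 1) (p₂ := 1-η) (by linarith) hx0 zero_le_one h1m.le (by ring)
      rw [Real.one_rpow] at hg
      have h2 : (1-η) ^ (M j t/ρ) ≤ 1 - η * (M j t/ρ) := by nlinarith [hg]
      exact mul_le_mul_of_nonneg_left h2 hy
    · rw [hyneg j t ht h]
      have hx0 : 0 ≤ -(M j t) / ρ := div_nonneg (by linarith) hρ.le
      have hx1' : -(M j t)/ρ ≤ 1 := by
        rw [div_le_one hρ]; have := (abs_le.mp (hM j t ht)).1; linarith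
      have hg := Real.geom_mean_le_arith_mean2_weighted (w₁ := 1 - (-(M j t)/ρ))
        (w₂ := -(M j t)/ρ) (p₁ := 1) (p₂ := 1+η) (by linarith) hx0 zero_le_one h1p.le (by ring)
      rw [Real.one_rpow] at hg
      have h2 : (1+η) ^ (-(M j t)/ρ) ≤ 1 - η * (M j t/ρ) := by
        have : -(M j t)/ρ = -(M j t / ρ) := by ring
        nlinarith [hg]
      exact mul_le_mul_of_nonneg_left h2 hy
  -- potential bound
  have hPhi : ∀ t, t ≤ K → ∑ j, y j t ≤ (r:ℝ) := by
    intro t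
    induction t with
    | zero => intro _; simp [hy0]
    | succ n ih =>
      intro hn
      have hn' : n < K := hn
      calc ∑ j, y j (n+1) ≤ ∑ j, y j n * (1 - η * (M j n / ρ)) :=
            Finset.sum_le_sum (fun j _ => hstep j n hn')
        _ = ∑ j, y j n - (η/ρ) * ∑ j, y j n * M j n := by
            rw [Finset.mul_sum, ← Finset.sum_sub_distrib]
            refine Finset.sum_congr rfl (fun j _ => ?_)
            field_simp
        _ ≤ ∑ j, y j n := by
            have h1 := horacle n hn'
            have h2 : 0 ≤ η/ρ := by positivity
            nlinarith
        _ ≤ (r:ℝ) := ih hn'.le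
  -- lower bound on each weight
  intro i
  have hE1 : -η - η^2 ≤ Real.log (1 - η) :=
    (Real.le_log_iff_exp_le h1m).mpr (exp_le_one_sub η hηpos hηle)
  have hE2 : η - η^2 ≤ Real.log (1 + η) :=
    (Real.le_log_iff_exp_le h1p).mpr (exp_le_one_add η hηpos hηle)
  have hlow : ∀ t, t ≤ K →
      Real.exp (∑ s ∈ Finset.range t, (-(η/ρ) * M i s - η^2)) ≤ y i t := by
    intro t
    induction t with
    | zero => intro _; simp [hy0]
    | succ n ih =>
      intro hn
      have hn' : n < K := hn
      rw [Finset.sum_range_succ, Real.exp_add]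
      have hx1 := hxub i n hn'
      have hxm1 := hxlb i n hn'
      have key : ∃ c, y i (n+1) = y i n * c ∧
          Real.exp (-(η/ρ) * M i n - η^2) ≤ c := by
        rcases le_or_gt 0 (M i n) with h | h
        · refine ⟨_, hypos i n hn' h, ?_⟩
          rw [Real.rpow_def_of_pos h1m, Real.exp_le_exp]
          have hx0 : 0 ≤ M i n / ρ := div_nonneg h hρ.le
          have h3 : (-η - η^2) * (M i n / ρ) ≤ Real.log (1-η) * (M i n / ρ) :=
            mul_le_mul_of_nonneg_right hE1 hx0
          have h4 : -(η/ρ) * M i n = -η * (M i n / ρ) := by ring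
          nlinarith [sq_nonneg η]
        · refine ⟨_, hyneg i n hn' h, ?_⟩
          rw [Real.rpow_def_of_pos h1p, Real.exp_le_exp]
          have hx0 : 0 ≤ -(M i n) / ρ := div_nonneg (by linarith) hρ.le
          have hx1' : -(M i n)/ρ ≤ 1 := by
            rw [div_le_one hρ]; have := (abs_le.mp (hM i n hn')).1; linarith
          have h3 : (η - η^2) * (-(M i n) / ρ) ≤ Real.log (1+η) * (-(M i n) / ρ) :=
            mul_le_mul_of_nonneg_right hE2 hx0
          have h4 : -(η/ρ) * M i n = η * (-(M i n) / ρ) := by ring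
          nlinarith [sq_nonneg η]
      obtain ⟨c, hc, hkc⟩ := key
      have hyn := hyall n hn'.le i
      rw [hc]
      exact mul_le_mul (ih hn'.le) hkc (Real.exp_pos _).le hyn.le
  -- combine
  have hr0 : (0:ℝ) < r := by positivity
  have hr1 : (1:ℝ) < r := by exact_mod_cast lt_of_lt_of_le one_lt_two (by exact_mod_cast hr)
  have hiK : y i K ≤ (r:ℝ) :=
    le_trans (Finset.single_le_sum (f := fun j => y j K)
      (fun j _ => (hyall K le_rfl j).le) (Finset.mem_univ i)) (hPhi K le_rfl)
  have hsum : ∑ s ∈ Finset.range K, (-(η/ρ) * M i s - η^2)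
      = -(η/ρ) * (∑ t ∈ Finset.range K, M i t) - η^2 * K := by
    rw [Finset.sum_sub_distrib, ← Finset.mul_sum, Finset.sum_const, Finset.card_range,
      nsmul_eq_mul]
    ring
  have hlog : -(η/ρ) * (∑ t ∈ Finset.range K, M i t) - η^2 * K ≤ Real.log r := by
    rw [← hsum]
    exact (Real.le_log_iff_exp_le hr0).mpr (le_trans (hlow K le_rfl) hiK)
  set S := ∑ t ∈ Finset.range K, M i t with hS
  -- arithmetic
  have hLpos : 0 < Real.log r := Real.log_pos hr1
  have hKpos : (0:ℝ) < K := lt_of_lt_of_le (by positivity) hK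
  have e1 : 4 * ρ^2 * Real.log r ≤ (K:ℝ) * ε^2 := by
    rw [div_le_iff₀ (by positivity : (0:ℝ) < ε^2)] at hK; exact hK
  have e2 : -2*ε*S - ε^2*K ≤ Real.log r * (4*ρ^2) := by
    have := mul_le_mul_of_nonneg_right hlog (by positivity : (0:ℝ) ≤ 4*ρ^2)
    have heq : (-(η/ρ) * S - η^2 * K) * (4*ρ^2) = -2*ε*S - ε^2*K := by
      rw [hη]; field_simp; ring
    linarith [heq ▸ this]
  have e2' : -2*ε*S - ε^2*(K:ℝ) ≤ 4*ρ^2*Real.log r := by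
    have hcomm : Real.log (r:ℝ) * (4*ρ^2) = 4*ρ^2*Real.log (r:ℝ) := by ring
    linarith [e2]
  have hSK : -(ε * K) ≤ S := by
    have h2e : (0:ℝ) < 2*ε := by linarith
    have h5 : (2*ε) * (-S) ≤ (2*ε) * (ε*(K:ℝ)) := by linarith [e1, e2']
    have := le_of_mul_le_mul_left h5 h2e
    linarith
  rw [one_div, ← div_eq_inv_mul, le_div_iff₀ hKpos]
  linarith
end

section
/- (Multiplicative-weights regret bound underlying the Generalized AHK theorem.) Fix r ≥ 2, K ∈ ℕ, ρ > 0, and η ∈ (0, 1/2]. Let M_{i,t} ∈ ℝ for i ∈ {1,…,r}, t ∈ {1,…,K} satisfy |M_{i,t}| ≤ ρ for all i,t, and define weights y_{i,t} by the multiplicative update rule: y_{i,1} = 1, and y_{i,t+1} = y_{i,t}·(1−η)^{M_{i,t}/ρ} if M_{i,t} ≥ 0, y_{i,t+1} = y_{i,t}·(1+η)^{−M_{i,t}/ρ} if M_{i,t} < 0. Then for every i ∈ {1,…,r}: ∑_{t=1}^K ( ∑_{j=1}^r y_{j,t} M_{j,t} ) / ( ∑_{j=1}^r y_{j,t} ) ≤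 ∑_{t=1}^K M_{i,t} + η·∑_{t=1}^K |M_{i,t}| + (ρ·ln r)/η. -/
open Finset


lemma mw_log_one_sub (η : ℝ) (h0 : 0 < η) (h2 : η ≤ 1/2) :
    -η - η^2 ≤ Real.log (1 - η) := by
  have h1 : (0:ℝ) < 1 - η := by linarith
  rw [Real.le_log_iff_exp_le h1]
  have hb := Real.exp_bound (x := -η) (by rw [abs_neg, abs_of_pos h0]; linarith) (n := 4) (by norm_num)
  have hS : ∑ i ∈ Finset.range 4, (-η) ^ i / (Nat.factorial i) = 1 - η + η^2/2 - η^3/6 := by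
    simp [Finset.sum_range_succ, Nat.factorial]
    ring
  rw [hS, abs_neg, abs_of_pos h0] at hb
  have hb1 : Real.exp (-η) ≤ 1 - η + η^2/2 - η^3/6 + η^4 * (5/96) := by
    have h := (abs_le.mp hb).2
    norm_num [Nat.factorial] at h
    linarith
  have hp : (0:ℝ) < 1 + η^2 := by positivity
  have hb2 : Real.exp (-(η^2)) ≤ 1 / (1 + η^2) := by
    have h := Real.add_one_le_exp (η^2)
    rw [Real.exp_neg, inv_eq_one_div, div_le_div_iff₀ (Real.exp_pos _) hp]
    linarith
  have heq : Real.exp (-η - η^2) = Real.exp (-η) * Real.exp (-(η^2)) := by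
    rw [← Real.exp_add]; ring_nf
  rw [heq]
  have hprod : Real.exp (-η) * Real.exp (-(η^2)) ≤
      (1 - η + η^2/2 - η^3/6 + η^4 * (5/96)) * (1 / (1 + η^2)) :=
    mul_le_mul hb1 hb2 (Real.exp_pos _).le (by nlinarith)
  have hfin : (1 - η + η^2/2 - η^3/6 + η^4 * (5/96)) * (1 / (1 + η^2)) ≤ 1 - η := by
    rw [mul_one_div, div_le_iff₀ hp]
    have h3 : η^3 ≤ η^2 * (1/2) := by nlinarith
    have h4 : η^4 ≤ η^2 * (1/4) := by nlinarith
    nlinarith [sq_nonneg η]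
  linarith

lemma mw_log_one_add (η : ℝ) (h0 : 0 < η) (h2 : η ≤ 1/2) :
    η - η^2 ≤ Real.log (1 + η) := by
  have h1 : (0:ℝ) < 1 + η := by linarith
  rw [Real.le_log_iff_exp_le h1]
  have h := Real.add_one_le_exp (-(η - η^2))
  rw [Real.exp_neg] at h
  have hx : (0:ℝ) < 1 - η + η^2 := by nlinarith
  have h' : Real.exp (η - η^2) ≤ 1 / (1 - η + η^2) := by
    rw [le_div_iff₀ hx]
    have he := Real.exp_pos (η - η^2)
    have h2' := mul_le_mul_of_nonneg_left h he.le
    rw [mul_add, mul_inv_cancel₀ he.ne'] at h2'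
    nlinarith [h2']
  have : (1:ℝ) / (1 - η + η^2) ≤ 1 + η := by
    rw [div_le_iff₀ hx]; nlinarith
  linarith

lemma mw_rpow_chord (b x : ℝ) (hb : 0 < b) (hx0 : 0 ≤ x) (hx1 : x ≤ 1) :
    b ^ x ≤ 1 - x + x * b := by
  have h := convexOn_exp.2 (Set.mem_univ (0:ℝ)) (Set.mem_univ (Real.log b))
      (by linarith : (0:ℝ) ≤ 1 - x) hx0 (by ring)
  simp only [smul_eq_mul, mul_zero, zero_add, Real.exp_zero, mul_one, Real.exp_log hb] at h
  rw [Real.rpow_def_of_pos hb, mul_comm]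
  linarith

/-- Multiplicative-weights per-expert regret bound: for gains `M i t` of
magnitude at most `ρ` and multiplicative update with rate `η ∈ (0, 1/2]`, the
total normalized weighted gain is at most the gain of any single expert `i`
plus `η ∑ |M i t| + ρ ln r / η`. -/
theorem mw_regret_bound
    (r K : ℕ) (hr : 2 ≤ r) (ρ : ℝ) (hρ : 0 < ρ)
    (η : ℝ) (hη : 0 < η) (hη2 : η ≤ 1 / 2)
    (M : Fin r → ℕ → ℝ) (hM : ∀ i t, t < K → |M i t| ≤ ρ)
    (y : Fin r → ℕ → ℝ)
    (hy0 : ∀ i, y i 0 = 1)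
    (hypos : ∀ i t, t < K → 0 ≤ M i t → y i (t + 1) = y i t * (1 - η) ^ (M i t / ρ))
    (hyneg : ∀ i t, t < K → M i t < 0 → y i (t + 1) = y i t * (1 + η) ^ (-(M i t) / ρ)) :
    ∀ i, ∑ t ∈ Finset.range K, (∑ j, y j t * M j t) / (∑ j, y j t) ≤
      (∑ t ∈ Finset.range K, M i t) + η * (∑ t ∈ Finset.range K, |M i t|) +
        ρ * Real.log r / η := by
  intro i
  haveI : Nonempty (Fin r) := ⟨⟨0, by omega⟩⟩
  have hbase1 : (0:ℝ) < 1 - η := by linarith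
  have hbase2 : (0:ℝ) < 1 + η := by linarith
  set Φ : ℕ → ℝ := fun t => ∑ j, y j t with hΦ
  set G : ℕ → ℝ := fun t => (∑ j, y j t * M j t) / Φ t with hG
  -- positivity of weights
  have hyp : ∀ t, t ≤ K → ∀ j, 0 < y j t := by
    intro t
    induction t with
    | zero => intro _ j; rw [hy0]; norm_num
    | succ n ih =>
      intro hn j
      have hnK : n < K := hn
      have hyn := ih (le_of_lt hnK) j
      rcases le_or_gt 0 (M j n) with h | h
      · rw [hypos j n hnK h]; exact mul_pos hyn (Real.rpow_pos_of_pos hbase1 _)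
      · rw [hyneg j n hnK h]; exact mul_pos hyn (Real.rpow_pos_of_pos hbase2 _)
  have hΦpos : ∀ t, t ≤ K → 0 < Φ t := fun t ht =>
    Finset.sum_pos (fun j _ => hyp t ht j) Finset.univ_nonempty
  -- per-step weight bound
  have hstep : ∀ j t, t < K → y j (t+1) ≤ y j t * (1 - η * (M j t / ρ)) := by
    intro j t ht
    have hyt := hyp t (le_of_lt ht) j
    have hMb := hM j t ht
    rcases le_or_gt 0 (M j t) with h | h
    · rw [hypos j t ht h]
      have hx0 : 0 ≤ M j t / ρ := div_nonneg h hρ.le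
      have hx1 : M j t / ρ ≤ 1 := (div_le_one hρ).mpr (le_trans (le_abs_self _) hMb)
      have hc := mw_rpow_chord (1-η) (M j t / ρ) hbase1 hx0 hx1
      calc y j t * (1-η) ^ (M j t / ρ)
          ≤ y j t * (1 - M j t / ρ + (M j t / ρ) * (1-η)) :=
            mul_le_mul_of_nonneg_left hc hyt.le
        _ = y j t * (1 - η * (M j t / ρ)) := by ring
    · rw [hyneg j t ht h]
      have hx0 : 0 ≤ -(M j t) / ρ := div_nonneg (by linarith) hρ.le
      have hx1 : -(M j t) / ρ ≤ 1 := (div_le_one hρ).mpr (le_trans (neg_le_abs _) hMb)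
      have hc := mw_rpow_chord (1+η) (-(M j t) / ρ) hbase2 hx0 hx1
      calc y j t * (1+η) ^ (-(M j t) / ρ)
          ≤ y j t * (1 - -(M j t) / ρ + (-(M j t) / ρ) * (1+η)) :=
            mul_le_mul_of_nonneg_left hc hyt.le
        _ = y j t * (1 - η * (M j t / ρ)) := by ring
  -- potential step
  have hΦstep : ∀ t, t < K → Φ (t+1) ≤ Φ t - (η/ρ) * ∑ j, y j t * M j t := by
    intro t ht
    calc Φ (t+1) ≤ ∑ j, y j t * (1 - η * (M j t / ρ)) :=
          Finset.sum_le_sum (fun j _ => hstep j t ht)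
      _ = ∑ j, (y j t - (η/ρ) * (y j t * M j t)) := by
          apply Finset.sum_congr rfl; intro j _; field_simp
      _ = Φ t - (η/ρ) * ∑ j, y j t * M j t := by
          rw [Finset.sum_sub_distrib, Finset.mul_sum]
  -- G bound from above
  have hGle : ∀ t, t < K → G t ≤ ρ := by
    intro t ht
    have hΦt := hΦpos t (le_of_lt ht)
    rw [hG, div_le_iff₀ hΦt]
    have : ∑ j, y j t * M j t ≤ ∑ j, y j t * ρ := by
      apply Finset.sum_le_sum
      intro j _
      exact mul_le_mul_of_nonneg_left (le_trans (le_abs_self _) (hM j t ht))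
        (hyp t (le_of_lt ht) j).le
    calc ∑ j, y j t * M j t ≤ ∑ j, y j t * ρ := this
      _ = ρ * Φ t := by rw [← Finset.sum_mul]; ring
  -- log step
  have hlog : ∀ t, t < K → Real.log (Φ (t+1)) ≤ Real.log (Φ t) - (η/ρ) * G t := by
    intro t ht
    have hΦt := hΦpos t (le_of_lt ht)
    have hΦt1 := hΦpos (t+1) ht
    have hGd : ∑ j, y j t * M j t = G t * Φ t := by
      rw [hG]; field_simp
    have harg : 0 < 1 - (η/ρ) * G t := by
      have h1 : (η/ρ) * G t ≤ (η/ρ) * ρ :=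
        mul_le_mul_of_nonneg_left (hGle t ht) (div_nonneg hη.le hρ.le)
      have h2 : (η/ρ) * ρ = η := by field_simp
      linarith
    have hΦle : Φ (t+1) ≤ Φ t * (1 - (η/ρ) * G t) := by
      have := hΦstep t ht
      rw [hGd] at this
      nlinarith [this]
    calc Real.log (Φ (t+1)) ≤ Real.log (Φ t * (1 - (η/ρ) * G t)) :=
          Real.log_le_log hΦt1 hΦle
      _ = Real.log (Φ t) + Real.log (1 - (η/ρ) * G t) :=
          Real.log_mul hΦt.ne' harg.ne'
      _ ≤ Real.log (Φ t) - (η/ρ) * G t := by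
          have := Real.log_le_sub_one_of_pos harg
          linarith
  -- telescoping
  have htel : ∀ n, n ≤ K →
      Real.log (Φ n) ≤ Real.log (Φ 0) - (η/ρ) * ∑ t ∈ Finset.range n, G t := by
    intro n
    induction n with
    | zero => intro _; simp
    | succ m ih =>
      intro h
      have hm : m < K := h
      have h1 := hlog m hm
      have h2 := ih (le_of_lt hm)
      rw [Finset.sum_range_succ]
      have : (η/ρ) * (∑ t ∈ Finset.range m, G t + G m)
          = (η/ρ) * ∑ t ∈ Finset.range m, G t + (η/ρ) * G m := by ring
      rw [this]
      linarith
  -- lower bound on log y i n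
  have hlow : ∀ n, n ≤ K →
      -(η/ρ) * (∑ t ∈ Finset.range n, M i t) - (η^2/ρ) * (∑ t ∈ Finset.range n, |M i t|)
        ≤ Real.log (y i n) := by
    intro n
    induction n with
    | zero => intro _; simp [hy0]
    | succ m ih =>
      intro h
      have hm : m < K := h
      have ihm := ih (le_of_lt hm)
      have hym := hyp m (le_of_lt hm) i
      rw [Finset.sum_range_succ, Finset.sum_range_succ]
      rcases le_or_gt 0 (M i m) with hc | hc
      · rw [hypos i m hm hc, Real.log_mul hym.ne' (Real.rpow_pos_of_pos hbase1 _).ne',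
          Real.log_rpow hbase1]
        have hA := mw_log_one_sub η hη (by linarith)
        have hx0 : 0 ≤ M i m / ρ := div_nonneg hc hρ.le
        have : (M i m / ρ) * (-η - η^2) ≤ (M i m / ρ) * Real.log (1 - η) :=
          mul_le_mul_of_nonneg_left hA hx0
        have habs : |M i m| = M i m := abs_of_nonneg hc
        rw [habs]
        have heq : -(η/ρ) * (∑ t ∈ Finset.range m, M i t + M i m)
            - (η^2/ρ) * (∑ t ∈ Finset.range m, |M i t| + M i m)
            = (-(η/ρ) * (∑ t ∈ Finset.range m, M i t)
              - (η^2/ρ) * (∑ t ∈ Finset.range m, |M i t|)) + (M i m / ρ) * (-η - η^2) := by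
          ring
        rw [heq]
        linarith
      · rw [hyneg i m hm hc, Real.log_mul hym.ne' (Real.rpow_pos_of_pos hbase2 _).ne',
          Real.log_rpow hbase2]
        have hA := mw_log_one_add η hη (by linarith)
        have hx0 : 0 ≤ -(M i m) / ρ := div_nonneg (by linarith) hρ.le
        have : (-(M i m) / ρ) * (η - η^2) ≤ (-(M i m) / ρ) * Real.log (1 + η) :=
          mul_le_mul_of_nonneg_left hA hx0
        have habs : |M i m| = -(M i m) := abs_of_neg hc
        rw [habs]
        have heq : -(η/ρ) * (∑ t ∈ Finset.range m, M i t + M i m)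
            - (η^2/ρ) * (∑ t ∈ Finset.range m, |M i t| + -(M i m))
            = (-(η/ρ) * (∑ t ∈ Finset.range m, M i t)
              - (η^2/ρ) * (∑ t ∈ Finset.range m, |M i t|)) + (-(M i m) / ρ) * (η - η^2) := by
          ring
        rw [heq]
        linarith
  -- Φ 0 = r
  have hΦ0 : Φ 0 = r := by
    simp [hΦ, hy0]
  -- y i K ≤ Φ K
  have hyΦ : Real.log (y i K) ≤ Real.log (Φ K) := by
    apply Real.log_le_log (hyp K le_rfl i)
    exact Finset.single_le_sum (fun j _ => (hyp K le_rfl j).le) (Finset.mem_univ i)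
  have key : (η/ρ) * (∑ t ∈ Finset.range K, G t) ≤
      Real.log r + (η/ρ) * (∑ t ∈ Finset.range K, M i t)
        + (η^2/ρ) * (∑ t ∈ Finset.range K, |M i t|) := by
    have h1 := htel K le_rfl
    have h2 := hlow K le_rfl
    rw [hΦ0] at h1
    linarith
  -- conclude
  have hpos : (0:ℝ) < ρ / η := div_pos hρ hη
  have h3 := mul_le_mul_of_nonneg_left key hpos.le
  have e1 : ρ / η * ((η/ρ) * (∑ t ∈ Finset.range K, G t)) = ∑ t ∈ Finset.range K, G t := by
    field_simp
  have e2 : ρ / η * (Real.log r + (η/ρ) * (∑ t ∈ Finset.range K, M i t)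
        + (η^2/ρ) * (∑ t ∈ Finset.range K, |M i t|))
      = (∑ t ∈ Finset.range K, M i t) + η * (∑ t ∈ Finset.range K, |M i t|)
        + ρ * Real.log r / η := by
    field_simp
    ring
  rw [e1, e2] at h3
  exact h3
end

section
/- Let (Ω, D) be a finite probability space, A ⊆ Ω an event with D(A) > 0, g : Ω → [0,1], δ > 0, and k ≥ 1 an integer. Draw ω_1,…,ω_N independently from D and let S = {j ∈ {1,…,N} : ω_j ∈ A}. Then the probability of the event that |S| ≥ k and simultaneously | (1/|S|)·∑_{j∈S} g(ω_j) − E_D[g·1_A]/D(A) | > δ is at most 2·exp(−2·k·δ²). -/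
open MeasureTheory Finset
open scoped Classical

lemma hoeff_core (p : ℝ) (hp0 : 0 ≤ p) (hp1 : p ≤ 1) {t : ℝ} (ht : 0 ≤ t) :
    1 - p + p * Real.exp t ≤ Real.exp (t * p + t ^ 2 / 8) := by
  set F : ℝ → ℝ := fun u => 1 - p + p * Real.exp u with hF
  have hFpos : ∀ u, 0 < F u := by
    intro u
    rcases eq_or_lt_of_le hp0 with h | h
    · simp [hF, ← h]
    · have := Real.exp_pos u
      have : 0 < p * Real.exp u := by positivity
      simp only [hF]; linarith
  have hFne : ∀ u, F u ≠ 0 := fun u => (hFpos u).ne'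
  -- derivative of F
  have hFder : ∀ u, HasDerivAt F (p * Real.exp u) u := by
    intro u
    exact ((Real.hasDerivAt_exp u).const_mul p).const_add (1 - p)
  set d : ℝ → ℝ := fun u => p * Real.exp u / F u with hd
  have hlogder : ∀ u, HasDerivAt (fun x => Real.log (F x)) (d u) u := by
    intro u
    exact (hFder u).log (hFne u)
  -- derivative of d
  have hdder : ∀ u, HasDerivAt d
      ((p * Real.exp u * F u - p * Real.exp u * (p * Real.exp u)) / (F u) ^ 2) u := by
    intro u
    have hN : HasDerivAt (fun x => p * Real.exp x) (p * Real.exp u) u :=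
      (Real.hasDerivAt_exp u).const_mul p
    exact hN.div (hFder u) (hFne u)
  have hd0 : d 0 = p := by simp [hd, hF]
  -- bound on derivative of d
  have hdbound : ∀ u, |(p * Real.exp u * F u - p * Real.exp u * (p * Real.exp u)) / (F u) ^ 2|
      ≤ 1 / 4 := by
    intro u
    have hFu := hFpos u
    have hFu' : F u = 1 - p + p * Real.exp u := rfl
    have h1 : p * Real.exp u * F u - p * Real.exp u * (p * Real.exp u)
        = p * Real.exp u * (1 - p) := by simp only [hF]; ring
    rw [h1, abs_div, abs_of_nonneg (mul_nonneg (mul_nonneg hp0 (Real.exp_pos u).le) (by linarith)), abs_of_nonneg (by positivity)]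
    rw [div_le_div_iff₀ (by positivity) (by norm_num)]
    nlinarith [sq_nonneg (p * Real.exp u - (1 - p)), Real.exp_pos u, hFu']
  -- |d u - p| ≤ u / 4 for u ≥ 0
  have hdlip : ∀ u, 0 ≤ u → |d u - p| ≤ u / 4 := by
    intro u hu
    have := Convex.norm_image_sub_le_of_norm_hasDerivWithin_le
      (f := d) (f' := fun u => (p * Real.exp u * F u - p * Real.exp u * (p * Real.exp u)) / (F u) ^ 2)
      (C := 1 / 4) (s := Set.Ici (0:ℝ))
      (fun x _ => (hdder x).hasDerivWithinAt) (fun x _ => by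
        rw [Real.norm_eq_abs]; exact hdbound x)
      (convex_Ici 0) Set.self_mem_Ici hu
    rw [Real.norm_eq_abs, Real.norm_eq_abs, sub_zero, abs_of_nonneg hu] at this
    calc |d u - p| = |d u - d 0| := by rw [hd0]
    _ ≤ 1 / 4 * u := this
    _ = u / 4 := by ring
  -- h is antitone on [0, ∞)
  set h : ℝ → ℝ := fun u => Real.log (F u) - p * u - u ^ 2 / 8 with hh
  have hhder : ∀ u, HasDerivAt h (d u - p - u / 4) u := by
    intro u
    have h1 : HasDerivAt (fun x : ℝ => p * x) p u := by
      simpa using (hasDerivAt_id u).const_mul p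
    have h2 : HasDerivAt (fun x : ℝ => x ^ 2 / 8) (u / 4) u := by
      have := (hasDerivAt_pow 2 u).div_const 8
      simpa using this.congr_deriv (by ring)
    exact ((hlogder u).sub h1).sub h2
  have hanti : AntitoneOn h (Set.Ici 0) := by
    apply antitoneOn_of_deriv_nonpos (convex_Ici 0)
    · exact fun x _ => (hhder x).continuousAt.continuousWithinAt
    · intro x hx
      exact (hhder x).differentiableAt.differentiableWithinAt
    · intro x hx
      rw [interior_Ici] at hx
      rw [(hhder x).deriv]
      have := hdlip x (le_of_lt hx)
      have := abs_le.1 this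
      linarith [this.2]
  have h0 : h 0 = 0 := by simp [hh, hF]
  have hle : h t ≤ 0 := by
    rw [← h0]
    exact hanti Set.self_mem_Ici ht ht
  have : Real.log (F t) ≤ t * p + t ^ 2 / 8 := by
    simp only [hh] at hle; linarith
  calc F t = Real.exp (Real.log (F t)) := (Real.exp_log (hFpos t)).symm
  _ ≤ Real.exp (t * p + t ^ 2 / 8) := Real.exp_le_exp.2 this


-- convexity pointwise bound
lemma exp_convex_bound {x t : ℝ} (h0 : 0 ≤ x) (h1 : x ≤ 1) :
    Real.exp (t * x) ≤ 1 - x + x * Real.exp t := by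
  have := convexOn_exp.2 (Set.mem_univ (0:ℝ)) (Set.mem_univ t)
    (by linarith : (0:ℝ) ≤ 1 - x) h0 (by ring)
  simp only [smul_eq_mul, mul_zero, zero_add, Real.exp_zero, mul_one] at this
  calc Real.exp (t * x) = Real.exp (x * t) := by rw [mul_comm]
  _ ≤ 1 - x + x * Real.exp t := this

lemma tail_factor {Ω : Type*} [Fintype Ω] (w G : Ω → ℝ) (S : Finset Ω)
    (hw : ∀ x, 0 ≤ w x) (hG : ∀ x, G x ∈ Set.Icc (0:ℝ) 1)
    (a c t δ : ℝ) (ha : 0 < a)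
    (haS : ∑ x ∈ S, w x = a) (hc : ∑ x ∈ S, w x * G x = a * c) (ht : 0 ≤ t) :
    ∑ x ∈ S, w x * Real.exp (t * (G x - c - δ)) ≤
      a * Real.exp (-(t * δ) + t ^ 2 / 8) := by
  have hc0 : 0 ≤ c := by
    have : 0 ≤ ∑ x ∈ S, w x * G x :=
      Finset.sum_nonneg fun x _ => mul_nonneg (hw x) (hG x).1
    nlinarith
  have hc1 : c ≤ 1 := by
    have : ∑ x ∈ S, w x * G x ≤ ∑ x ∈ S, w x :=
      Finset.sum_le_sum fun x _ => by nlinarith [(hG x).2, hw x]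
    nlinarith
  have key : ∑ x ∈ S, w x * Real.exp (t * G x) ≤ a * (1 - c + c * Real.exp t) := by
    calc ∑ x ∈ S, w x * Real.exp (t * G x)
        ≤ ∑ x ∈ S, w x * (1 - G x + G x * Real.exp t) :=
          Finset.sum_le_sum fun x _ =>
            mul_le_mul_of_nonneg_left (exp_convex_bound (hG x).1 (hG x).2) (hw x)
      _ = ∑ x ∈ S, w x - ∑ x ∈ S, w x * G x + (∑ x ∈ S, w x * G x) * Real.exp t := by
          rw [Finset.sum_mul, ← Finset.sum_sub_distrib, ← Finset.sum_add_distrib]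
          exact Finset.sum_congr rfl fun x _ => by ring
      _ = a * (1 - c + c * Real.exp t) := by rw [haS, hc]; ring
  have hcore : 1 - c + c * Real.exp t ≤ Real.exp (t * c + t ^ 2 / 8) :=
    hoeff_core c hc0 hc1 ht
  calc ∑ x ∈ S, w x * Real.exp (t * (G x - c - δ))
      = Real.exp (-(t * (c + δ))) * ∑ x ∈ S, w x * Real.exp (t * G x) := by
        rw [Finset.mul_sum]
        refine Finset.sum_congr rfl fun x _ => ?_
        rw [← mul_assoc, mul_comm (Real.exp _) (w x), mul_assoc, ← Real.exp_add]
        ring_nf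
    _ ≤ Real.exp (-(t * (c + δ))) * (a * (1 - c + c * Real.exp t)) :=
        mul_le_mul_of_nonneg_left key (Real.exp_pos _).le
    _ ≤ Real.exp (-(t * (c + δ))) * (a * Real.exp (t * c + t ^ 2 / 8)) :=
        mul_le_mul_of_nonneg_left (mul_le_mul_of_nonneg_left hcore ha.le)
          (Real.exp_pos _).le
    _ = a * Real.exp (-(t * δ) + t ^ 2 / 8) := by
        rw [← mul_assoc, mul_comm (Real.exp _) a, mul_assoc, ← Real.exp_add]
        ring_nf

-- measure of a set in a finite space as a finite sum
lemma measure_set_eq_sum {Ω : Type*} [Fintype Ω] [MeasurableSpace Ω]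
    [MeasurableSingletonClass Ω] (D : Measure Ω) (S : Set Ω) :
    D S = ∑ x ∈ Finset.univ.filter (· ∈ S), D {x} := by
  have hS : S = ⋃ x ∈ (Finset.univ.filter (· ∈ S) : Finset Ω), ({x} : Set Ω) := by
    ext y; simp
  have hd : Set.PairwiseDisjoint (↑(Finset.univ.filter (· ∈ S) : Finset Ω))
      (fun x => ({x} : Set Ω)) := by
    intro x _ y _ hxy
    simp [Set.disjoint_singleton, hxy]
  conv_lhs => rw [hS]
  exact measure_biUnion_finset hd (fun x _ => measurableSet_singleton x)
-- one-tail bound for a fixed pattern set s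
lemma one_tail {Ω : Type*} [Fintype Ω] (w G : Ω → ℝ) (A : Set Ω)
    (hw0 : ∀ x, 0 ≤ w x) (hG : ∀ x, G x ∈ Set.Icc (0:ℝ) 1)
    (a c q δ : ℝ) (ha : 0 < a) (hδ : 0 < δ)
    (haS : ∑ x ∈ Finset.univ.filter (· ∈ A), w x = a)
    (hqS : ∑ x ∈ Finset.univ.filter (· ∉ A), w x = q)
    (hgc : ∑ x ∈ Finset.univ.filter (· ∈ A), w x * G x = a * c)
    (N : ℕ) (s : Finset (Fin N)) :
    ∑ ω ∈ Finset.univ.filter (fun ω : Fin N → Ω => (∀ j, (j ∈ s ↔ ω j ∈ A)) ∧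
        (s.card : ℝ) * (c + δ) ≤ ∑ j ∈ s, G (ω j)), ∏ j, w (ω j)
      ≤ Real.exp (-2 * s.card * δ ^ 2) * (a ^ s.card * q ^ (N - s.card)) := by
  classical
  set t : ℝ := 4 * δ with hts
  have ht : 0 ≤ t := by positivity
  set m : ℕ := s.card with hm
  set W : (Fin N → Ω) → ℝ := fun ω => ∏ j, w (ω j) with hW
  have hWnn : ∀ ω, 0 ≤ W ω := fun ω => Finset.prod_nonneg fun j _ => hw0 _
  set e : (Fin N → Ω) → ℝ := fun ω => Real.exp (t * ∑ j ∈ s, (G (ω j) - c - δ)) with he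
  set P : (Fin N → Ω) → Prop := fun ω => ∀ j, (j ∈ s ↔ ω j ∈ A) with hP
  set Q : (Fin N → Ω) → Prop :=
    fun ω => (m : ℝ) * (c + δ) ≤ ∑ j ∈ s, G (ω j) with hQ
  set H : Fin N → Ω → ℝ := fun j x =>
    if (j ∈ s ↔ x ∈ A) then
      (if j ∈ s then w x * Real.exp (t * (G x - c - δ)) else w x) else 0 with hH
  have hHnn : ∀ j x, 0 ≤ H j x := by
    intro j x
    simp only [hH]
    split_ifs
    · exact mul_nonneg (hw0 x) (Real.exp_pos _).le
    · exact hw0 x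
    · exact le_refl 0
  -- step A
  have stepA : ∑ ω ∈ Finset.univ.filter (fun ω => P ω ∧ Q ω), W ω
      ≤ ∑ ω ∈ Finset.univ.filter P, W ω * e ω := by
    calc ∑ ω ∈ Finset.univ.filter (fun ω => P ω ∧ Q ω), W ω
        ≤ ∑ ω ∈ Finset.univ.filter (fun ω => P ω ∧ Q ω), W ω * e ω := by
          apply Finset.sum_le_sum
          intro ω hω
          have hQω : Q ω := (Finset.mem_filter.1 hω).2.2
          have h1 : (1:ℝ) ≤ e ω := by
            rw [he]
            have : (0:ℝ) ≤ t * ∑ j ∈ s, (G (ω j) - c - δ) := by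
              apply mul_nonneg ht
              have hsum : ∑ j ∈ s, (G (ω j) - c - δ)
                  = (∑ j ∈ s, G (ω j)) - (m : ℝ) * (c + δ) := by
                rw [Finset.sum_sub_distrib, Finset.sum_sub_distrib, Finset.sum_const,
                  Finset.sum_const, hm]
                push_cast
                ring
              rw [hsum]
              linarith [hQω]
            calc (1:ℝ) = Real.exp 0 := Real.exp_zero.symm
            _ ≤ _ := Real.exp_le_exp.2 this
          exact le_mul_of_one_le_right (hWnn ω) h1
      _ ≤ ∑ ω ∈ Finset.univ.filter P, W ω * e ω := by
          apply Finset.sum_le_sum_of_subset_of_nonneg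
          · exact Finset.monotone_filter_right _ (fun ω _ hω => hω.1)
          · intro ω _ _
            exact mul_nonneg (hWnn ω) (Real.exp_pos _).le
  -- step B : rewrite as full sum of products
  have stepB : ∑ ω ∈ Finset.univ.filter P, W ω * e ω
      = ∑ ω : Fin N → Ω, ∏ j, H j (ω j) := by
    rw [Finset.sum_filter]
    apply Finset.sum_congr rfl
    intro ω _
    by_cases hω : P ω
    · rw [if_pos hω]
      have h1 : ∀ j, H j (ω j) =
          (if j ∈ s then w (ω j) * Real.exp (t * (G (ω j) - c - δ)) else w (ω j)) := by
        intro j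
        simp only [hH]
        rw [if_pos (hω j)]
      rw [Finset.prod_congr rfl (fun j _ => h1 j)]
      rw [Finset.prod_ite]
      have hfs : Finset.univ.filter (· ∈ s) = s := by
        rw [Finset.filter_mem_eq_inter, Finset.univ_inter]
      have hfns : Finset.univ.filter (fun j => ¬ j ∈ s) = Finset.univ \ s := by
        rw [Finset.filter_not, Finset.filter_mem_eq_inter, Finset.univ_inter]
      rw [hfs, hfns]
      have hWsplit : W ω = (∏ j ∈ s, w (ω j)) * ∏ j ∈ Finset.univ \ s, w (ω j) := by
        simp only [hW]
        rw [← Finset.prod_sdiff (Finset.subset_univ s)]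
        ring
      have heprod : e ω = ∏ j ∈ s, Real.exp (t * (G (ω j) - c - δ)) := by
        simp only [he]
        rw [Finset.mul_sum, Real.exp_sum]
      rw [hWsplit, heprod, Finset.prod_mul_distrib]
      ring
    · rw [if_neg hω]
      symm
      simp only [hP, not_forall] at hω
      obtain ⟨j, hj⟩ := hω
      apply Finset.prod_eq_zero (Finset.mem_univ j)
      simp only [hH]
      rw [if_neg hj]
  -- step C : factorize
  have stepC : ∑ ω : Fin N → Ω, ∏ j, H j (ω j) = ∏ j, ∑ x, H j x :=
    (Fintype.prod_sum (fun j x => H j x)).symm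
  -- step D : per-coordinate bounds
  have hin : ∀ j ∈ s, ∑ x, H j x ≤ a * Real.exp (-2 * δ ^ 2) := by
    intro j hj
    have h1 : ∑ x, H j x
        = ∑ x ∈ Finset.univ.filter (· ∈ A), w x * Real.exp (t * (G x - c - δ)) := by
      rw [Finset.sum_filter]
      apply Finset.sum_congr rfl
      intro x _
      simp only [hH, hj, iff_true, if_true]
      by_cases hx : x ∈ A <;> simp [hx]
    rw [h1]
    have := tail_factor w G (Finset.univ.filter (· ∈ A)) hw0 hG a c t δ ha haS hgc ht
    calc _ ≤ a * Real.exp (-(t * δ) + t ^ 2 / 8) := this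
    _ = a * Real.exp (-2 * δ ^ 2) := by
        congr 1
        rw [hts]
        ring_nf
  have hout : ∀ j, ¬ j ∈ s → ∑ x, H j x = q := by
    intro j hj
    rw [← hqS, Finset.sum_filter]
    apply Finset.sum_congr rfl
    intro x _
    simp only [hH, hj, iff_false, if_false]
    by_cases hx : x ∈ A <;> simp [hx, hj]
  have stepD : ∏ j, ∑ x, H j x
      ≤ ∏ j : Fin N, (if j ∈ s then a * Real.exp (-2 * δ ^ 2) else q) := by
    apply Finset.prod_le_prod
    · intro j _
      exact Finset.sum_nonneg fun x _ => hHnn j x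
    · intro j _
      by_cases hj : j ∈ s
      · rw [if_pos hj]; exact hin j hj
      · rw [if_neg hj, hout j hj]
  have hqnn : 0 ≤ q := by
    rw [← hqS]; exact Finset.sum_nonneg fun x _ => hw0 x
  have stepE : ∏ j : Fin N, (if j ∈ s then a * Real.exp (-2 * δ ^ 2) else q)
      = Real.exp (-2 * m * δ ^ 2) * (a ^ m * q ^ (N - m)) := by
    rw [Finset.prod_ite]
    have hfs : Finset.univ.filter (· ∈ s) = s := by
      rw [Finset.filter_mem_eq_inter, Finset.univ_inter]
    have hfns : Finset.univ.filter (fun j => ¬ j ∈ s) = Finset.univ \ s := by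
      rw [Finset.filter_not, Finset.filter_mem_eq_inter, Finset.univ_inter]
    rw [hfs, hfns, Finset.prod_const, Finset.prod_const,
      Finset.card_sdiff_of_subset (Finset.subset_univ s), Finset.card_univ, Fintype.card_fin,
      mul_pow, ← Real.exp_nat_mul]
    rw [← hm]
    ring_nf
  calc ∑ ω ∈ Finset.univ.filter (fun ω => P ω ∧ Q ω), W ω
      ≤ ∑ ω ∈ Finset.univ.filter P, W ω * e ω := stepA
    _ = ∑ ω : Fin N → Ω, ∏ j, H j (ω j) := stepB
    _ = ∏ j, ∑ x, H j x := stepC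
    _ ≤ ∏ j : Fin N, (if j ∈ s then a * Real.exp (-2 * δ ^ 2) else q) := stepD
    _ = Real.exp (-2 * m * δ ^ 2) * (a ^ m * q ^ (N - m)) := stepE

lemma fiber_bound {Ω : Type*} [Fintype Ω] (w gg : Ω → ℝ) (A : Set Ω)
    (hw0 : ∀ x, 0 ≤ w x) (hg : ∀ x, gg x ∈ Set.Icc (0:ℝ) 1)
    (a c q δ : ℝ) (ha : 0 < a) (hδ : 0 < δ)
    (haS : ∑ x ∈ Finset.univ.filter (· ∈ A), w x = a)
    (hqS : ∑ x ∈ Finset.univ.filter (· ∉ A), w x = q)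
    (hgc : ∑ x ∈ Finset.univ.filter (· ∈ A), w x * gg x = a * c)
    (k N : ℕ) (hk : 1 ≤ k) (F : Finset (Fin N → Ω))
    (hF : ∀ ω ∈ F, k ≤ (Finset.univ.filter (fun j => ω j ∈ A)).card ∧
        δ < |(∑ j ∈ Finset.univ.filter (fun j => ω j ∈ A), gg (ω j)) /
              ((Finset.univ.filter (fun j => ω j ∈ A)).card : ℝ) - c|)
    (s : Finset (Fin N)) :
    ∑ ω ∈ F.filter
        (fun ω => Finset.univ.filter (fun j => ω j ∈ A) = s), ∏ j, w (ω j)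
      ≤ 2 * Real.exp (-2 * k * δ ^ 2) * (a ^ s.card * q ^ (N - s.card)) := by
  classical
  have hqnn : 0 ≤ q := by
    rw [← hqS]; exact Finset.sum_nonneg fun x _ => hw0 x
  by_cases hks : k ≤ s.card
  swap
  · have hempty : ∑ ω ∈ F.filter
        (fun ω => Finset.univ.filter (fun j => ω j ∈ A) = s), ∏ j, w (ω j) = 0 := by
      apply Finset.sum_eq_zero
      intro ω hω
      exfalso
      rw [Finset.mem_filter] at hω
      exact hks (hω.2 ▸ (hF ω hω.1).1)
    rw [hempty]
    have h2 : (0:ℝ) ≤ 2 * Real.exp (-2 * k * δ ^ 2) := by positivity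
    exact mul_nonneg h2 (mul_nonneg (pow_nonneg ha.le _) (pow_nonneg hqnn _))
  -- main case
  have hm1 : 1 ≤ s.card := le_trans hk hks
  have hmpos : (0:ℝ) < (s.card : ℝ) := by exact_mod_cast hm1
  -- complementary function facts
  have hg' : ∀ x, (1 - gg x) ∈ Set.Icc (0:ℝ) 1 := by
    intro x
    constructor
    · linarith [(hg x).2]
    · linarith [(hg x).1]
  have hgc' : ∑ x ∈ Finset.univ.filter (· ∈ A), w x * (1 - gg x) = a * (1 - c) := by
    have : ∑ x ∈ Finset.univ.filter (· ∈ A), w x * (1 - gg x)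
        = (∑ x ∈ Finset.univ.filter (· ∈ A), w x)
          - ∑ x ∈ Finset.univ.filter (· ∈ A), w x * gg x := by
      rw [← Finset.sum_sub_distrib]
      exact Finset.sum_congr rfl fun x _ => by ring
    rw [this, haS, hgc]; ring
  -- tail sets
  set Up : Finset (Fin N → Ω) := Finset.univ.filter (fun ω : Fin N → Ω =>
      (∀ j, (j ∈ s ↔ ω j ∈ A)) ∧ (s.card : ℝ) * (c + δ) ≤ ∑ j ∈ s, gg (ω j)) with hUp
  set Lo : Finset (Fin N → Ω) := Finset.univ.filter (fun ω : Fin N → Ω =>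
      (∀ j, (j ∈ s ↔ ω j ∈ A)) ∧ (s.card : ℝ) * ((1 - c) + δ) ≤
        ∑ j ∈ s, (1 - gg (ω j))) with hLo
  have hsub : F.filter
        (fun ω => Finset.univ.filter (fun j => ω j ∈ A) = s) ⊆ Up ∪ Lo := by
    intro ω hω
    rw [Finset.mem_filter] at hω
    obtain ⟨hωF, hs⟩ := hω
    have hdev := (hF ω hωF).2
    rw [hs] at hdev
    have hmem : ∀ j, (j ∈ s ↔ ω j ∈ A) := by
      intro j
      rw [← hs]
      simp
    set T : ℝ := ∑ j ∈ s, gg (ω j) with hT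
    rcases lt_abs.mp hdev with h | h
    · apply Finset.mem_union_left
      rw [hUp, Finset.mem_filter]
      refine ⟨Finset.mem_univ _, hmem, ?_⟩
      have : c + δ < T / (s.card : ℝ) := by linarith
      have := (lt_div_iff₀ hmpos).mp this
      linarith
    · apply Finset.mem_union_right
      rw [hLo, Finset.mem_filter]
      refine ⟨Finset.mem_univ _, hmem, ?_⟩
      have hTsum : ∑ j ∈ s, (1 - gg (ω j)) = (s.card : ℝ) - T := by
        rw [Finset.sum_sub_distrib, Finset.sum_const, nsmul_eq_mul, mul_one]
      have h2 : δ < -(T / (s.card : ℝ) - c) := h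
      have h3 : T / (s.card : ℝ) < c - δ := by linarith
      have := (div_lt_iff₀ hmpos).mp h3
      rw [hTsum]
      nlinarith
  have hWnn : ∀ ω : Fin N → Ω, 0 ≤ ∏ j, w (ω j) :=
    fun ω => Finset.prod_nonneg fun j _ => hw0 _
  have hunion : ∑ ω ∈ Up ∪ Lo, ∏ j, w (ω j)
      ≤ (∑ ω ∈ Up, ∏ j, w (ω j)) + ∑ ω ∈ Lo, ∏ j, w (ω j) := by
    have := Finset.sum_union_inter (s₁ := Up) (s₂ := Lo) (f := fun ω => ∏ j, w (ω j))
    have hnn : 0 ≤ ∑ ω ∈ Up ∩ Lo, ∏ j, w (ω j) :=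
      Finset.sum_nonneg fun ω _ => hWnn ω
    linarith
  have bUp := one_tail w gg A hw0 hg a c q δ ha hδ haS hqS hgc N s
  have bLo := one_tail w (fun x => 1 - gg x) A hw0 hg' a (1 - c) q δ ha hδ haS hqS hgc' N s
  have hexp : Real.exp (-2 * s.card * δ ^ 2) ≤ Real.exp (-2 * k * δ ^ 2) := by
    apply Real.exp_le_exp.2
    have : (k : ℝ) ≤ (s.card : ℝ) := by exact_mod_cast hks
    nlinarith [sq_nonneg δ]
  calc ∑ ω ∈ F.filter
        (fun ω => Finset.univ.filter (fun j => ω j ∈ A) = s), ∏ j, w (ω j)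
      ≤ ∑ ω ∈ Up ∪ Lo, ∏ j, w (ω j) :=
        Finset.sum_le_sum_of_subset_of_nonneg hsub (fun ω _ _ => hWnn ω)
    _ ≤ (∑ ω ∈ Up, ∏ j, w (ω j)) + ∑ ω ∈ Lo, ∏ j, w (ω j) := hunion
    _ ≤ Real.exp (-2 * s.card * δ ^ 2) * (a ^ s.card * q ^ (N - s.card))
        + Real.exp (-2 * s.card * δ ^ 2) * (a ^ s.card * q ^ (N - s.card)) :=
        add_le_add bUp bLo
    _ = 2 * Real.exp (-2 * s.card * δ ^ 2) * (a ^ s.card * q ^ (N - s.card)) := by ring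
    _ ≤ 2 * Real.exp (-2 * k * δ ^ 2) * (a ^ s.card * q ^ (N - s.card)) := by
        have hb : (0:ℝ) ≤ a ^ s.card * q ^ (N - s.card) :=
          mul_nonneg (pow_nonneg ha.le _) (pow_nonneg hqnn _)
        nlinarith [hexp, hb]

/-- Concentration of the empirical conditional average: among `N` i.i.d. draws
from a finite probability space `(Ω, D)` and an event `A` of positive
probability, the probability that at least `k` samples fall in `A` and the
empirical average of a `[0,1]`-valued function `g` over those samples deviates
from the conditional expectation `E[g·1_A]/D(A)` by more than `δ` is at most
`2·exp(-2·k·δ²)`. -/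
theorem conditional_sample_average_concentration
    (Ω : Type*) [Fintype Ω] [MeasurableSpace Ω] [MeasurableSingletonClass Ω]
    (D : Measure Ω) [IsProbabilityMeasure D]
    (A : Set Ω) (hA : 0 < (D A).toReal)
    (g : Ω → ℝ) (hg : ∀ ω, g ω ∈ Set.Icc (0 : ℝ) 1)
    (δ : ℝ) (hδ : 0 < δ) (k : ℕ) (hk : 1 ≤ k) (N : ℕ) :
    (Measure.pi (fun _ : Fin N => D))
      {ω | k ≤ (Finset.univ.filter (fun j => ω j ∈ A)).card ∧
        δ < |(∑ j ∈ Finset.univ.filter (fun j => ω j ∈ A), g (ω j)) /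
              ((Finset.univ.filter (fun j => ω j ∈ A)).card : ℝ) -
            (∫ x, A.indicator g x ∂D) / (D A).toReal|}
      ≤ ENNReal.ofReal (2 * Real.exp (-2 * k * δ ^ 2)) := by
  classical
  set w : Ω → ℝ := fun x => (D {x}).toReal with hw
  have hw0 : ∀ x, 0 ≤ w x := fun x => ENNReal.toReal_nonneg
  have hDA : (D A).toReal = ∑ x ∈ Finset.univ.filter (· ∈ A), w x := by
    rw [measure_set_eq_sum D A, ENNReal.toReal_sum (fun x _ => measure_ne_top D _)]
  set a : ℝ := ∑ x ∈ Finset.univ.filter (· ∈ A), w x with hadef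
  set q : ℝ := ∑ x ∈ Finset.univ.filter (· ∉ A), w x with hqdef
  have hapos : 0 < a := hDA ▸ hA
  have hqnn : 0 ≤ q := Finset.sum_nonneg fun x _ => hw0 x
  have htot : ∑ x, w x = 1 := by
    have h3 := measure_set_eq_sum D (Set.univ : Set Ω)
    simp only [Set.mem_univ, Finset.filter_true] at h3
    have h4 := congrArg ENNReal.toReal h3
    rw [measure_univ, ENNReal.toReal_sum (fun x _ => measure_ne_top D _)] at h4
    rw [← h4]
    simp
  have haq : a + q = 1 := by
    rw [hadef, hqdef]
    rw [Finset.sum_filter_add_sum_filter_not Finset.univ (· ∈ A) w]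
    exact htot
  set c : ℝ := (∑ x ∈ Finset.univ.filter (· ∈ A), w x * g x) / a with hcdef
  have hgc : ∑ x ∈ Finset.univ.filter (· ∈ A), w x * g x = a * c := by
    rw [hcdef]
    field_simp
  have hint : (∫ x, A.indicator g x ∂D) = ∑ x ∈ Finset.univ.filter (· ∈ A), w x * g x := by
    rw [MeasureTheory.integral_fintype (Integrable.of_finite)]
    simp only [smul_eq_mul, Measure.real]
    have h5 : ∀ x : Ω, w x * A.indicator g x = if x ∈ A then w x * g x else 0 := by
      intro x
      by_cases hx : x ∈ A <;> simp [Set.indicator_apply, hx]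
    rw [Finset.sum_congr rfl (fun x _ => h5 x), ← Finset.sum_filter]
  have hc2 : (∫ x, A.indicator g x ∂D) / (D A).toReal = c := by
    rw [hint, hDA, hcdef]
  rw [show (∫ x, A.indicator g x ∂D) / (D A).toReal = c from hc2]
  -- measure as a finite sum
  have hkey : ∀ (S : Set (Fin N → Ω)), (Measure.pi (fun _ : Fin N => D)) S
      = ENNReal.ofReal (∑ ω ∈ Finset.univ.filter (· ∈ S), ∏ j, w (ω j)) := by
    intro S
    have hsingle : ∀ ω : Fin N → Ω,
        (Measure.pi (fun _ : Fin N => D)) {ω} = ENNReal.ofReal (∏ j, w (ω j)) := by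
      intro ω
      have hset : ({ω} : Set (Fin N → Ω)) = Set.pi Set.univ (fun j => {ω j}) := by
        ext x
        simp [Set.mem_pi, funext_iff]
      rw [hset, MeasureTheory.Measure.pi_pi]
      rw [ENNReal.ofReal_prod_of_nonneg (fun j _ => hw0 _)]
      exact Finset.prod_congr rfl fun j _ => (ENNReal.ofReal_toReal (measure_ne_top D _)).symm
    rw [measure_set_eq_sum]
    rw [Finset.sum_congr rfl (fun ω _ => hsingle ω)]
    rw [← ENNReal.ofReal_sum_of_nonneg
      (fun ω _ => Finset.prod_nonneg fun j _ => hw0 _)]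
  rw [hkey]
  apply ENNReal.ofReal_le_ofReal
  simp only [Set.mem_setOf_eq, Finset.filter_congr_decidable]
  rw [← Finset.sum_fiberwise_of_maps_to
    (g := fun ω : Fin N → Ω => Finset.univ.filter (fun j => ω j ∈ A))
    (t := (Finset.univ : Finset (Fin N)).powerset)
    (fun ω _ => Finset.mem_powerset.2 (Finset.subset_univ _))
    (fun ω => ∏ j, w (ω j))]
  have hsum1 : ∑ s ∈ (Finset.univ : Finset (Fin N)).powerset,
      a ^ s.card * q ^ (N - s.card) = 1 := by
    have hb := Finset.prod_add (fun _ : Fin N => a) (fun _ : Fin N => q) Finset.univ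
    rw [haq] at hb
    simp only [Finset.prod_const, one_pow] at hb
    rw [← hb.symm]
    apply Finset.sum_congr rfl
    intro s hs
    rw [Finset.card_sdiff_of_subset (Finset.subset_univ s), Finset.card_univ, Fintype.card_fin]
  refine le_trans (Finset.sum_le_sum (fun s _ =>
    fiber_bound w g A hw0 hg a c q δ hapos hδ rfl rfl hgc k N hk _
      (fun ω hω => by simp only [Finset.mem_filter] at hω; exact hω.2) s)) ?_
  rw [← Finset.mul_sum, hsum1, mul_one]
end

section
/- (Properties of the sampled multi-unit mechanism.) Consider n buyers with finite type sets T_i, type marginals f_i (probability distributions on T_i) and joint product distribution μ on ∏_i T_i; m identical items; valuations v_i : {0,…,m} × T_i → [0,L] with v_i(0,t) = 0; and budgets B_i ∈ [0,L]. For each ℓ ∈ {1,…,K} let (q^ℓ, p^ℓ) assign to every type vector t⃗ quantities q_i^ℓ(t⃗) ∈ {0,…,m} with ∑_i q_i^ℓ(t⃗) ≤ m and payments p_i^ℓ(t⃗) ∈ [0, B_i] with p_i^ℓ(t⃗) ≤ v_i(q_i^ℓ(t⃗), t⃗_i). Define the mechanism that, on reported type vector t⃗, picks ℓ ∈ {1,…,K}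 uniformly at random and uses (q^ℓ(t⃗), p^ℓ(t⃗)); its interim quantities are X_{iq}(t) = (1/K)·∑_ℓ Pr_{t⃗∼μ}[q_i^ℓ(t⃗) = q | t⃗_i = t] and P_i(t) = (1/K)·∑_ℓ E_{t⃗∼μ}[p_i^ℓ(t⃗) | t⃗_i = t], and the interim utility of buyer i of true type t reporting t' is U_i(t',t) = ∑_q v_i(q,t)·X_{iq}(t') − P_i(t'). Suppose there exist numbers X̂_{iq}(t), P̂_i(t) and δ ≥ 0, R ∈ ℝ such that |X_{iq}(t) − X̂_{iq}(t)| ≤ δ and |P_i(t) − P̂_i(t)| ≤ δ for all i, q, t; the hat variables satisfy exact Bayesian incentive compatibility, ∑_q v_i(q,t)·X̂_{iq}(t) − P̂_i(t) ≥ ∑_q v_i(q,t)·X̂_{iq}(t') − P̂_i(t') for all i and t, t' ∈ T_i; and ∑_i ∑_{t∈T_i} f_i(t)·P̂_i(t) ≥ R. Then: (a) in every realization the mechanism is ex-post individually rational and no buyer ever pays more than his budget; (b) the mechanism is ε'-BIC with ε' = 2·((m+1)·L + 1)·δ, i.e. U_i(t,t) ≥ U_i(t',t) − ε' for all i and t,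 t' ∈ T_i; and (c) its expected revenue satisfies ∑_i ∑_{t∈T_i} f_i(t)·P_i(t) ≥ R − n·δ. -/
open Finset
open scoped Classical

/-- Properties of the sampled multi-unit mechanism: choosing uniformly among
`K` per-round ex-post feasible allocation/payment rules yields a mechanism
that is (a) ex-post individually rational and budget respecting, (b)
`2((m+1)L+1)δ`-BIC whenever its interim quantities are `δ`-close to exactly
BIC "hat" quantities, and (c) extracts expected revenue at least `R - nδ`
whenever the hat quantities extract revenue at least `R`. -/
theorem sampled_multiunit_mechanism_properties
    (n m K : ℕ) (hK : 0 < K) (L : ℝ)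
    (T : Fin n → Type*) [∀ i, Fintype (T i)]
    (f : ∀ i, T i → ℝ)
    (hf_pos : ∀ i t, 0 < f i t) (hf_sum : ∀ i, ∑ t, f i t = 1)
    (μ : (∀ i, T i) → ℝ) (hμ : ∀ tv, μ tv = ∏ i, f i (tv i))
    (v : ∀ i : Fin n, Fin (m + 1) → T i → ℝ)
    (hv_nonneg : ∀ i q t, 0 ≤ v i q t) (hv_le : ∀ i q t, v i q t ≤ L)
    (hv_zero : ∀ i t, v i 0 t = 0)
    (B : Fin n → ℝ) (hB : ∀ i, B i ∈ Set.Icc (0 : ℝ) L)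
    (q : Fin K → (∀ i, T i) → Fin n → Fin (m + 1))
    (p : Fin K → (∀ i, T i) → Fin n → ℝ)
    (hsupply : ∀ ℓ tv, ∑ i, ((q ℓ tv i : ℕ)) ≤ m)
    (hp_nonneg : ∀ ℓ tv i, 0 ≤ p ℓ tv i)
    (hp_budget : ∀ ℓ tv i, p ℓ tv i ≤ B i)
    (hp_ir : ∀ ℓ tv i, p ℓ tv i ≤ v i (q ℓ tv i) (tv i))
    (X : ∀ i : Fin n, Fin (m + 1) → T i → ℝ)
    (hX : ∀ i qq t, X i qq t =
      (1 / (K : ℝ)) * ∑ ℓ, (∑ tv, if tv i = t ∧ q ℓ tv i = qq then μ tv else 0) / f i t)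
    (P : ∀ i : Fin n, T i → ℝ)
    (hP : ∀ i t, P i t =
      (1 / (K : ℝ)) * ∑ ℓ, (∑ tv, if tv i = t then μ tv * p ℓ tv i else 0) / f i t)
    (U : ∀ i : Fin n, T i → T i → ℝ)
    (hU : ∀ i t' t, U i t' t = (∑ qq, v i qq t * X i qq t') - P i t')
    (Xh : ∀ i : Fin n, Fin (m + 1) → T i → ℝ) (Ph : ∀ i : Fin n, T i → ℝ)
    (δ : ℝ) (hδ : 0 ≤ δ) (R : ℝ)
    (hXh : ∀ i qq t, |X i qq t - Xh i qq t| ≤ δ)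
    (hPh : ∀ i t, |P i t - Ph i t| ≤ δ)
    (hBIC : ∀ i (t t' : T i),
      (∑ qq, v i qq t * Xh i qq t') - Ph i t' ≤ (∑ qq, v i qq t * Xh i qq t) - Ph i t)
    (hRev : R ≤ ∑ i, ∑ t, f i t * Ph i t) :
    (∀ ℓ tv i, p ℓ tv i ≤ v i (q ℓ tv i) (tv i) ∧ p ℓ tv i ≤ B i) ∧
    (∀ i (t t' : T i), U i t' t - 2 * (((m : ℝ) + 1) * L + 1) * δ ≤ U i t t) ∧
    (R - n * δ ≤ ∑ i, ∑ t, f i t * P i t) := by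
  refine ⟨fun ℓ tv i => ⟨hp_ir ℓ tv i, hp_budget ℓ tv i⟩, ?_, ?_⟩
  · intro i t t'
    have hL : 0 ≤ L := le_trans (hv_nonneg i 0 t) (hv_le i 0 t)
    have key : ∀ s : T i,
        |((∑ qq, v i qq t * X i qq s) - P i s) - ((∑ qq, v i qq t * Xh i qq s) - Ph i s)|
          ≤ (((m : ℝ) + 1) * L + 1) * δ := by
      intro s
      have h1 : ((∑ qq, v i qq t * X i qq s) - P i s) - ((∑ qq, v i qq t * Xh i qq s) - Ph i s)
          = (∑ qq, v i qq t * (X i qq s - Xh i qq s)) - (P i s - Ph i s) := by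
        simp only [mul_sub, Finset.sum_sub_distrib]
        ring
      rw [h1]
      calc |(∑ qq, v i qq t * (X i qq s - Xh i qq s)) - (P i s - Ph i s)|
          ≤ |∑ qq, v i qq t * (X i qq s - Xh i qq s)| + |P i s - Ph i s| :=
            abs_sub _ _
        _ ≤ (∑ qq : Fin (m+1), L * δ) + δ := by
            refine add_le_add ?_ (hPh i s)
            refine le_trans (Finset.abs_sum_le_sum_abs _ _) ?_
            refine Finset.sum_le_sum fun qq _ => ?_
            rw [abs_mul, abs_of_nonneg (hv_nonneg i qq t)]
            exact mul_le_mul (hv_le i qq t) (hXh i qq s) (abs_nonneg _) hL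
        _ = (((m : ℝ) + 1) * L + 1) * δ := by
            simp [Finset.sum_const, Finset.card_univ]
            ring
    have k1 := abs_le.1 (key t')
    have k2 := abs_le.1 (key t)
    have hb := hBIC i t t'
    rw [hU i t' t, hU i t t]
    nlinarith [k1.1, k1.2, k2.1, k2.2]
  · have step : ∀ i : Fin n, ∑ t, f i t * Ph i t - δ ≤ ∑ t, f i t * P i t := by
      intro i
      have : ∑ t, (f i t * Ph i t - f i t * δ) ≤ ∑ t, f i t * P i t := by
        refine Finset.sum_le_sum fun t _ => ?_
        have := (abs_le.1 (hPh i t)).1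
        nlinarith [hf_pos i t]
      calc ∑ t, f i t * Ph i t - δ
          = ∑ t, (f i t * Ph i t - f i t * δ) := by
            rw [Finset.sum_sub_distrib, ← Finset.sum_mul, hf_sum i, one_mul]
        _ ≤ _ := this
    calc R - n * δ ≤ (∑ i, ∑ t, f i t * Ph i t) - n * δ := by linarith
      _ = ∑ i : Fin n, (∑ t, f i t * Ph i t - δ) := by
          rw [Finset.sum_sub_distrib]
          simp [Finset.sum_const, Finset.card_univ]
      _ ≤ ∑ i, ∑ t, f i t * P i t := Finset.sum_le_sum fun i _ => step i
end

section
/- (Correctness of the dynamic program for a seller with a non-linear utility of revenue.) Let n, m ∈ ℕ, β ∈ ℝ, U : ℤ → ℝ, and for each i ∈ {1,…,n} a nonempty finite set F_i ⊆ ℤ × {0,…,m} of feasible (payment, quantity) pairs, each containing at least one pair with quantity 0, together with weights α_i : F_i → ℝ. Define A(i,k,z) for i ∈ {1,…,n+1}, k ∈ {0,…,m}, z ∈ ℤ by A(n+1,k,z) = 0 and A(i,k,z) = max over (p,q) ∈ F_i with q ≤ m−k of [ β·(U(z+p) − U(z)) + α_i(p,q) + A(i+1, k+q, z+p) ]. Then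 A(1,0,0) equals the maximum, over all choices ((p_1,q_1),…,(p_n,q_n)) with (p_i,q_i) ∈ F_i for each i and ∑_{i=1}^n q_i ≤ m, of ∑_{i=1}^n α_i(p_i,q_i) + β·( U(∑_{i=1}^n p_i) − U(0) ). -/
open Finset

/-- Correctness of the dynamic program for a seller with a non-linear utility
of revenue: tracking the number of allocated items and the cumulative revenue,
the recursion `A i k z = max_{(p,q) ∈ F i, q ≤ m-k}
(β(U(z+p) - U z) + α i (p,q) + A (i+1) (k+q) (z+p))` with `A (n+1) k z = 0`
computes in `A 1 0 0` the maximum of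
`∑ α i (p_i,q_i) + β(U(∑ p_i) - U 0)` over feasible choices with `∑ q_i ≤ m`. -/
theorem nonlinear_seller_dp_correct
    (n m : ℕ) (β : ℝ) (U : ℤ → ℝ)
    (F : ℕ → Finset (ℤ × ℕ))
    (hFq : ∀ i ∈ Finset.Icc 1 n, ∀ pq ∈ F i, pq.2 ≤ m)
    (hF0 : ∀ i ∈ Finset.Icc 1 n, ∃ p : ℤ, (p, 0) ∈ F i)
    (α : ℕ → ℤ × ℕ → ℝ)
    (A : ℕ → ℕ → ℤ → ℝ)
    (hbase : ∀ k z, A (n + 1) k z = 0)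
    (hrec : ∀ i, 1 ≤ i → i ≤ n → ∀ k, k ≤ m → ∀ z : ℤ,
      ∀ hne : ((F i).filter (fun pq => pq.2 ≤ m - k)).Nonempty,
      A i k z = ((F i).filter (fun pq => pq.2 ≤ m - k)).sup' hne
        (fun pq => β * (U (z + pq.1) - U z) + α i pq + A (i + 1) (k + pq.2) (z + pq.1))) :
    IsGreatest {s : ℝ | ∃ ch : ℕ → ℤ × ℕ,
      (∀ i ∈ Finset.Icc 1 n, ch i ∈ F i) ∧
      (∑ i ∈ Finset.Icc 1 n, (ch i).2) ≤ m ∧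
      s = (∑ i ∈ Finset.Icc 1 n, α i (ch i)) +
        β * (U (∑ i ∈ Finset.Icc 1 n, (ch i).1) - U 0)}
      (A 1 0 0) := by
  have key : ∀ d i, i + d = n + 1 → 1 ≤ i → ∀ k, k ≤ m → ∀ z : ℤ,
      IsGreatest {s : ℝ | ∃ ch : ℕ → ℤ × ℕ,
        (∀ j ∈ Finset.Icc i n, ch j ∈ F j) ∧
        (∑ j ∈ Finset.Icc i n, (ch j).2) ≤ m - k ∧
        s = (∑ j ∈ Finset.Icc i n, α j (ch j)) +
          β * (U (z + ∑ j ∈ Finset.Icc i n, (ch j).1) - U z)} (A i k z) := by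
    intro d
    induction d with
    | zero =>
      intro i hi h1 k hk z
      have hieq : i = n + 1 := by omega
      subst hieq
      have hempty : Finset.Icc (n + 1) n = ∅ := Finset.Icc_eq_empty (by omega)
      constructor
      · rw [hbase]
        exact ⟨fun _ => (0, 0), by simp [hempty], by simp [hempty], by simp [hempty]⟩
      · rintro s ⟨ch, -, -, rfl⟩
        rw [hbase]
        simp [hempty]
    | succ d ih =>
      intro i hi h1 k hk z
      have hin : i ≤ n := by omega
      have hiI : i ∈ Finset.Icc 1 n := by simp; omega
      obtain ⟨p0, hp0⟩ := hF0 i hiI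
      have hne : ((F i).filter (fun pq => pq.2 ≤ m - k)).Nonempty :=
        ⟨(p0, 0), Finset.mem_filter.2 ⟨hp0, by simp⟩⟩
      have hsplit : insert i (Finset.Icc (i + 1) n) = Finset.Icc i n := by
        ext j; simp only [Finset.mem_insert, Finset.mem_Icc]; omega
      have hnotmem : i ∉ Finset.Icc (i + 1) n := by simp
      rw [hrec i h1 hin k hk z hne]
      constructor
      · obtain ⟨pq, hpqmem, hsup⟩ := Finset.exists_mem_eq_sup' hne
          (fun pq => β * (U (z + pq.1) - U z) + α i pq + A (i + 1) (k + pq.2) (z + pq.1))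
        rw [hsup]
        obtain ⟨hpqF, hpqle⟩ := Finset.mem_filter.mp hpqmem
        have hk' : k + pq.2 ≤ m := by omega
        obtain ⟨⟨ch, hchF, hchq, hchs⟩, -⟩ :=
          ih (i + 1) (by omega) (by omega) (k + pq.2) hk' (z + pq.1)
        refine ⟨fun j => if j = i then pq else ch j, ?_, ?_, ?_⟩
        · intro j hj
          rcases eq_or_ne j i with rfl | hji
          · simpa using hpqF
          · simp only [if_neg hji]
            exact hchF j (by simp only [Finset.mem_Icc] at hj ⊢; omega)
        · rw [← hsplit, Finset.sum_insert hnotmem]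
          beta_reduce
          rw [if_pos rfl]
          have e : ∑ j ∈ Finset.Icc (i + 1) n, (if j = i then pq else ch j).2
              = ∑ j ∈ Finset.Icc (i + 1) n, (ch j).2 := by
            apply Finset.sum_congr rfl
            intro j hj
            rw [if_neg]
            simp only [Finset.mem_Icc] at hj; omega
          rw [e]; omega
        · rw [← hsplit, Finset.sum_insert hnotmem, Finset.sum_insert hnotmem]
          beta_reduce
          rw [if_pos rfl]
          have e1 : ∑ j ∈ Finset.Icc (i + 1) n, (if j = i then pq else ch j).1
              = ∑ j ∈ Finset.Icc (i + 1) n, (ch j).1 := by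
            apply Finset.sum_congr rfl
            intro j hj
            rw [if_neg]
            simp only [Finset.mem_Icc] at hj; omega
          have e2 : ∑ j ∈ Finset.Icc (i + 1) n, α j (if j = i then pq else ch j)
              = ∑ j ∈ Finset.Icc (i + 1) n, α j (ch j) := by
            apply Finset.sum_congr rfl
            intro j hj
            rw [if_neg]
            simp only [Finset.mem_Icc] at hj; omega
          rw [e1, e2, hchs, ← add_assoc z pq.1]
          ring
      · rintro s ⟨ch, hchF, hchq, rfl⟩
        have hiIcc : i ∈ Finset.Icc i n := by simp [hin]
        have hchi := hchF i hiIcc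
        rw [← hsplit, Finset.sum_insert hnotmem] at hchq ⊢
        have hqile : (ch i).2 ≤ m - k := by omega
        have hmem : ch i ∈ (F i).filter (fun pq => pq.2 ≤ m - k) :=
          Finset.mem_filter.2 ⟨hchi, hqile⟩
        refine le_trans ?_ (Finset.le_sup' _ hmem)
        have hk' : k + (ch i).2 ≤ m := by omega
        obtain ⟨-, hub⟩ := ih (i + 1) (by omega) (by omega) (k + (ch i).2) hk' (z + (ch i).1)
        have htail : (∑ j ∈ Finset.Icc (i + 1) n, α j (ch j)) +
            β * (U (z + (ch i).1 + ∑ j ∈ Finset.Icc (i + 1) n, (ch j).1) - U (z + (ch i).1))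
            ≤ A (i + 1) (k + (ch i).2) (z + (ch i).1) := by
          apply hub
          refine ⟨ch, fun j hj => hchF j ?_, by omega, rfl⟩
          simp only [Finset.mem_Icc] at hj ⊢; omega
        rw [Finset.sum_insert hnotmem, ← add_assoc z (ch i).1]
        linarith
  have h := key n 1 (by omega) le_rfl 0 (Nat.zero_le m) 0
  simpa using h
end

section
/- (A c-approximate welfare oracle certifies the c-relaxed program.) Let T_1,…,T_n be finite type sets with probability distributions f_i, let μ = ∏_i f_i be the product distribution on T = ∏_i T_i, and let m ∈ ℕ. For each type vector t⃗ ∈ T let F(t⃗) ⊆ [0,1]^{n×m} be a set of feasible allocations, and let α_{i,j,t} ≥ 0 for i ∈ {1,…,n}, j ∈ {1,…,m}, t ∈ T_i. Suppose there exist x* with x*(t⃗) ∈ F(t⃗) for every t⃗ and numbers X*_{i,j,t} satisfying f_i(t)·X*_{i,j,t} ≤ ∑_{t⃗ : t⃗_i = t} μ(t⃗)·x*_{i,j}(t⃗) for all i, j, t. Suppose c ≥ 1 and for each t⃗, x̃(t⃗) ∈ F(t⃗) is a c-approximate welfare maximizer: c·∑_{i,j} α_{i,j,t⃗_i}·x̃_{i,j}(t⃗)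 ≥ ∑_{i,j} α_{i,j,t⃗_i}·x_{i,j} for every x ∈ F(t⃗). Then ∑_{i,j,t} α_{i,j,t}·f_i(t)·X*_{i,j,t} ≤ c·∑_{t⃗∈T} μ(t⃗)·∑_{i,j} α_{i,j,t⃗_i}·x̃_{i,j}(t⃗). -/
open Finset
open scoped Classical

/-- A `c`-approximate welfare oracle certifies the `c`-relaxed program: if
interim allocations `Xs` are dominated by the true expected allocations of
some feasible `xs`, and `xt` is a per-type-vector `c`-approximate welfare
maximizer for nonnegative weights `α`, then the weighted interim value is at
most `c` times the expected weighted welfare of `xt`. -/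
theorem c_approx_oracle_certifies_relaxed_program
    (n m : ℕ) (T : Fin n → Type*) [∀ i, Fintype (T i)]
    (f : ∀ i, T i → ℝ) (hf : ∀ i t, 0 ≤ f i t) (hf1 : ∀ i, ∑ t, f i t = 1)
    (μ : (∀ i, T i) → ℝ) (hμ : ∀ tv, μ tv = ∏ i, f i (tv i))
    (F : (∀ i, T i) → Set (Fin n → Fin m → ℝ))
    (hF01 : ∀ tv, ∀ x ∈ F tv, ∀ i j, x i j ∈ Set.Icc (0 : ℝ) 1)
    (α : ∀ i : Fin n, Fin m → T i → ℝ) (hα : ∀ i j t, 0 ≤ α i j t)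
    (xs : (∀ i, T i) → Fin n → Fin m → ℝ) (hxs : ∀ tv, xs tv ∈ F tv)
    (Xs : ∀ i : Fin n, Fin m → T i → ℝ)
    (hXs : ∀ i j t, f i t * Xs i j t ≤ ∑ tv, if tv i = t then μ tv * xs tv i j else 0)
    (c : ℝ) (hc : 1 ≤ c)
    (xt : (∀ i, T i) → Fin n → Fin m → ℝ) (hxt : ∀ tv, xt tv ∈ F tv)
    (happrox : ∀ tv, ∀ x ∈ F tv,
      (∑ i, ∑ j, α i j (tv i) * x i j) ≤ c * ∑ i, ∑ j, α i j (tv i) * xt tv i j) :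
    (∑ i, ∑ j, ∑ t, α i j t * (f i t * Xs i j t)) ≤
      c * ∑ tv, μ tv * ∑ i, ∑ j, α i j (tv i) * xt tv i j := by
  have hμ0 : ∀ tv, 0 ≤ μ tv := by
    intro tv; rw [hμ]; exact Finset.prod_nonneg fun i _ => hf i (tv i)
  have step1 : (∑ i, ∑ j, ∑ t, α i j t * (f i t * Xs i j t)) ≤
      ∑ tv, μ tv * ∑ i, ∑ j, α i j (tv i) * xs tv i j := by
    have key : ∀ i j, (∑ t, α i j t * (f i t * Xs i j t)) ≤
        ∑ tv, α i j (tv i) * (μ tv * xs tv i j) := by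
      intro i j
      calc (∑ t, α i j t * (f i t * Xs i j t))
          ≤ ∑ t, α i j t * ∑ tv, if tv i = t then μ tv * xs tv i j else 0 := by
            apply Finset.sum_le_sum; intro t _
            exact mul_le_mul_of_nonneg_left (hXs i j t) (hα i j t)
        _ = ∑ t, ∑ tv, if tv i = t then α i j t * (μ tv * xs tv i j) else 0 := by
            apply Finset.sum_congr rfl; intro t _
            rw [Finset.mul_sum]
            apply Finset.sum_congr rfl; intro tv _
            split <;> simp
        _ = ∑ tv, ∑ t, if tv i = t then α i j t * (μ tv * xs tv i j) else 0 := by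
            rw [Finset.sum_comm]
        _ = ∑ tv, α i j (tv i) * (μ tv * xs tv i j) := by
            apply Finset.sum_congr rfl; intro tv _
            simp
    calc (∑ i, ∑ j, ∑ t, α i j t * (f i t * Xs i j t))
        ≤ ∑ i, ∑ j, ∑ tv, α i j (tv i) * (μ tv * xs tv i j) := by
          exact Finset.sum_le_sum fun i _ => Finset.sum_le_sum fun j _ => key i j
      _ = ∑ tv, μ tv * ∑ i, ∑ j, α i j (tv i) * xs tv i j := by
          simp_rw [Finset.mul_sum, ← mul_assoc, mul_comm (μ _)]
          conv_rhs => rw [Finset.sum_comm]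
          exact (Finset.sum_congr rfl fun i _ => Finset.sum_comm).symm
  have step2 : (∑ tv, μ tv * ∑ i, ∑ j, α i j (tv i) * xs tv i j) ≤
      c * ∑ tv, μ tv * ∑ i, ∑ j, α i j (tv i) * xt tv i j := by
    rw [Finset.mul_sum]
    apply Finset.sum_le_sum; intro tv _
    have h := happrox tv (xs tv) (hxs tv)
    calc μ tv * ∑ i, ∑ j, α i j (tv i) * xs tv i j
        ≤ μ tv * (c * ∑ i, ∑ j, α i j (tv i) * xt tv i j) :=
          mul_le_mul_of_nonneg_left h (hμ0 tv)
      _ = c * (μ tv * ∑ i, ∑ j, α i j (tv i) * xt tv i j) := by ring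
  exact step1.trans step2
end
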